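/- Let A be an incomplete n×n pairwise comparison matrix whose graph representation is a spanning tree, and suppose the missing entries may be filled with arbitrary positive real values (Method 1). Then there exists a completion B of A and a positive vector w ∈ ℝ^n such that B w = n·w; hence the minimum of λ_max over all positive completions equals n and the optimal consistency index CI = (λ_max − n)/(n − 1) equals 0. -/

import Mathlib

/-- The Perron (maximal) eigenvalue of a matrix, defined as the supremum of its
real eigenvalues; for a positive matrix this is the spectral radius. -/
noncomputable def lambdaMax {n : ℕ} (A : Matrix (Fin n) (Fin n) ℝ) : ℝ :=
  sSup {t : ℝ | ∃ v : Fin n → ℝ, v ≠ 0 ∧ A.mulVec v = t • v}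

/-- The completion `A(x)` of an incomplete pairwise comparison matrix `A`
whose missing entries above the diagonal are the positions in `miss`: each
missing entry `(i,j)` is filled with `x (i,j)` and the corresponding entry
below the diagonal with its reciprocal. -/
noncomputable def fillMatrix {n : ℕ} (A : Matrix (Fin n) (Fin n) ℝ)
    (miss : Finset (Fin n × Fin n)) (x : Fin n × Fin n → ℝ) :
    Matrix (Fin n) (Fin n) ℝ :=
  fun i j =>
    if (i, j) ∈ miss then x (i, j)
    else if (j, i) ∈ miss then 1 / x (j, i)
    else A i j

/-- The graph representation of an incomplete pairwise comparison matrix: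
`i ≠ j` are adjacent iff the entry at `(i,j)` is known (not missing). -/
def repGraph (n : ℕ) (miss : Finset (Fin n × Fin n)) : SimpleGraph (Fin n) :=
  SimpleGraph.fromRel (fun i j => (i, j) ∉ miss ∧ (j, i) ∉ miss)

section Aux

open Finset

/-- A finite `inf'` of continuous functions is continuous (on a set). -/
lemma continuousOn_finset_inf' {ι α : Type*} [TopologicalSpace α] {s : Finset ι}
    (hs : s.Nonempty) {f : ι → α → ℝ} {t : Set α}
    (hf : ∀ i ∈ s, ContinuousOn (f i) t) :
    ContinuousOn (fun x => s.inf' hs fun i => f i x) t := by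
  induction hs using Finset.Nonempty.cons_induction with
  | singleton a =>
      have he : (fun x => ({a} : Finset ι).inf' (Finset.singleton_nonempty a) fun i => f i x)
          = f a := by funext x; simp
      rw [he]
      exact hf a (by simp)
  | cons a s ha hs ih =>
      have he : (fun x => (Finset.cons a s ha).inf' (Finset.cons_nonempty ha) fun i => f i x)
          = fun x => (f a x) ⊓ (s.inf' hs fun i => f i x) := by
        funext x
        rw [Finset.inf'_cons]
      rw [he]
      exact (hf a (by simp)).inf (ih fun i hi => hf i (by simp [hi]))

/-- Perron's theorem (existence part) for positive matrices, proved by an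
elementary compactness argument. -/
lemma perron_exists {n : ℕ} (hn : 0 < n) (C : Matrix (Fin n) (Fin n) ℝ)
    (hpos : ∀ i j, 0 < C i j) :
    ∃ (lam : ℝ) (u : Fin n → ℝ), (∀ i, 0 < u i) ∧ C.mulVec u = lam • u := by
  haveI : Nonempty (Fin n) := ⟨⟨0, hn⟩⟩
  set Δ : Set (Fin n → ℝ) := {v | (∀ i, 0 ≤ v i) ∧ ∑ i, v i = 1} with hΔ
  -- compactness of Δ
  have hclosed : IsClosed Δ := by
    have h1 : IsClosed {v : Fin n → ℝ | ∀ i, 0 ≤ v i} := by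
      have : {v : Fin n → ℝ | ∀ i, 0 ≤ v i} = ⋂ i, {v | 0 ≤ v i} := by
        ext v; simp
      rw [this]
      exact isClosed_iInter fun i => isClosed_le continuous_const (continuous_apply i)
    have h2 : IsClosed {v : Fin n → ℝ | ∑ i, v i = 1} :=
      isClosed_eq (by continuity) continuous_const
    exact h1.inter h2
  have hsub : Δ ⊆ Set.univ.pi fun _ : Fin n => Set.Icc (0:ℝ) 1 := by
    rintro v ⟨h0, h1⟩ i _
    refine ⟨h0 i, ?_⟩
    calc v i ≤ ∑ j, v j := Finset.single_le_sum (fun j _ => h0 j) (mem_univ i)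
    _ = 1 := h1
  have hcomp : IsCompact Δ :=
    (isCompact_univ_pi fun _ => isCompact_Icc).of_isClosed_subset hclosed hsub
  -- mulVec continuity and positivity
  have hmc : Continuous fun v : Fin n → ℝ => C.mulVec v := by
    refine continuous_pi fun i => ?_
    simp only [Matrix.mulVec, dotProduct]
    exact continuous_finset_sum _ fun j _ => continuous_const.mul (continuous_apply j)
  have hCv : ∀ v ∈ Δ, ∀ i, 0 < C.mulVec v i := by
    rintro v ⟨h0, h1⟩ i
    obtain ⟨j, hj⟩ : ∃ j, 0 < v j := by
      by_contra h
      push_neg at h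
      have : ∑ j, v j = 0 := le_antisymm (Finset.sum_nonpos fun j _ => h j)
        (Finset.sum_nonneg fun j _ => h0 j)
      rw [h1] at this; norm_num at this
    exact Finset.sum_pos' (fun k _ => mul_nonneg (hpos i k).le (h0 k))
      ⟨j, mem_univ j, mul_pos (hpos i j) hj⟩
  -- the function to maximize
  set M : (Fin n → ℝ) → ℝ := fun v =>
    univ.inf' univ_nonempty fun i => C.mulVec (C.mulVec v) i / C.mulVec v i with hM
  have hMcont : ContinuousOn M Δ := by
    apply continuousOn_finset_inf'
    intro i _
    exact ContinuousOn.div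
      (((continuous_apply i).comp (hmc.comp hmc)).continuousOn)
      (((continuous_apply i).comp hmc).continuousOn)
      (fun v hv => (hCv v hv i).ne')
  have hΔne : Δ.Nonempty := by
    refine ⟨fun _ => (n : ℝ)⁻¹, fun i => by positivity, ?_⟩
    simp [Finset.sum_const, Finset.card_univ]
    field_simp
  obtain ⟨v₀, hv₀, hmax⟩ := hcomp.exists_isMaxOn hΔne hMcont
  set u : Fin n → ℝ := C.mulVec v₀ with hu
  have hupos : ∀ i, 0 < u i := hCv v₀ hv₀
  set lam : ℝ := M v₀ with hlam
  have hkey : ∀ i, lam * u i ≤ C.mulVec u i := by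
    intro i
    have h1 : lam ≤ C.mulVec u i / u i := Finset.inf'_le _ (mem_univ i)
    rw [le_div_iff₀ (hupos i)] at h1
    linarith
  refine ⟨lam, u, hupos, ?_⟩
  by_contra hne
  have hex : ∃ i₀, lam * u i₀ < C.mulVec u i₀ := by
    by_contra h
    push_neg at h
    apply hne
    funext i
    have := le_antisymm (hkey i) (h i)
    simp [Pi.smul_apply, smul_eq_mul, ← this]
  obtain ⟨i₀, hi₀⟩ := hex
  -- z = Cu - lam u ≥ 0, ≠ 0 at i₀
  set z : Fin n → ℝ := fun i => C.mulVec u i - lam * u i with hz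
  have hznn : ∀ i, 0 ≤ z i := fun i => by simp [hz]; linarith [hkey i]
  have hCz : ∀ i, 0 < C.mulVec z i := by
    intro i
    exact Finset.sum_pos' (fun k _ => mul_nonneg (hpos i k).le (hznn k))
      ⟨i₀, mem_univ i₀, mul_pos (hpos i i₀) (by simp [hz]; linarith)⟩
  have hstrict : ∀ i, lam * C.mulVec u i < C.mulVec (C.mulVec u) i := by
    intro i
    have h1 : C.mulVec z i = C.mulVec (C.mulVec u) i - lam * C.mulVec u i := by
      have : z = C.mulVec u - lam • u := by funext k; simp [hz]
      rw [this, Matrix.mulVec_sub, Matrix.mulVec_smul]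
      simp
    linarith [hCz i]
  -- normalized point
  set s : ℝ := ∑ i, u i with hs
  have hspos : 0 < s := Finset.sum_pos (fun i _ => hupos i) univ_nonempty
  set v₁ : Fin n → ℝ := s⁻¹ • u with hv₁
  have hv₁Δ : v₁ ∈ Δ := by
    constructor
    · intro i; exact mul_nonneg (inv_nonneg.mpr hspos.le) (hupos i).le
    · simp [hv₁, ← Finset.mul_sum, ← hs, inv_mul_cancel₀ hspos.ne']
  have hMv₁ : lam < M v₁ := by
    rw [hM]
    rw [Finset.lt_inf'_iff]
    intro i _
    have e1 : C.mulVec v₁ = s⁻¹ • C.mulVec u := by rw [hv₁, Matrix.mulVec_smul]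
    rw [e1, Matrix.mulVec_smul]
    simp only [Pi.smul_apply, smul_eq_mul]
    rw [mul_div_mul_left _ _ (inv_ne_zero hspos.ne')]
    have hCu : 0 < C.mulVec u i :=
      Finset.sum_pos (fun k _ => mul_pos (hpos i k) (hupos k)) univ_nonempty
    rw [lt_div_iff₀ hCu]
    exact hstrict i
  exact absurd (hmax hv₁Δ) (not_le.mpr hMv₁)

lemma two_le_add_inv {t : ℝ} (ht : 0 < t) : 2 ≤ t + 1 / t := by
  have key : t + 1 / t - 2 = (t - 1) ^ 2 / t := by field_simp; ring
  have h2 : 0 ≤ (t - 1) ^ 2 / t := div_nonneg (sq_nonneg _) ht.le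
  linarith

/-- For a positive reciprocal matrix, any eigenvalue with positive eigenvector
is at least `n` (Saaty). -/
lemma recip_eig_ge {n : ℕ} (hn : 0 < n) (C : Matrix (Fin n) (Fin n) ℝ)
    (hpos : ∀ i j, 0 < C i j) (hrec : ∀ i j, C j i = 1 / C i j)
    (u : Fin n → ℝ) (hu : ∀ i, 0 < u i) (lam : ℝ)
    (heig : C.mulVec u = lam • u) : (n : ℝ) ≤ lam := by
  haveI : Nonempty (Fin n) := ⟨⟨0, hn⟩⟩
  set f : Fin n → Fin n → ℝ := fun i j => C i j * u j / u i with hf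
  have hfpos : ∀ i j, 0 < f i j :=
    fun i j => div_pos (mul_pos (hpos i j) (hu j)) (hu i)
  have hfrec : ∀ i j, f j i = 1 / f i j := by
    intro i j
    rw [hf]
    simp only
    rw [hrec i j]
    field_simp
  have hrow : ∀ i, ∑ j, f i j = lam := by
    intro i
    have h1 : C.mulVec u i = lam * u i := by rw [heig]; simp
    have h2 : ∑ j, f i j = (∑ j, C i j * u j) / u i := by
      rw [hf]; simp only [← Finset.sum_div]
    rw [h2]
    have h3 : ∑ j, C i j * u j = C.mulVec u i := rfl
    rw [h3, h1, mul_div_assoc, div_self (hu i).ne', mul_one]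
  have htot : ∑ i, ∑ j, f i j = n * lam := by
    simp [hrow, Finset.sum_const, Finset.card_univ]
  have hpair : ∀ i j, 2 ≤ f i j + f j i := by
    intro i j
    rw [hfrec i j]
    exact two_le_add_inv (hfpos i j)
  have hsum2 : 2 * (n * lam) = ∑ i, ∑ j, (f i j + f j i) := by
    have hswap : ∑ i, ∑ j, f j i = ∑ i, ∑ j, f i j := Finset.sum_comm
    simp only [Finset.sum_add_distrib]
    rw [hswap, htot]
    ring
  have hge : (2 * n^2 : ℝ) ≤ ∑ i : Fin n, ∑ j : Fin n, (f i j + f j i) := by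
    calc (2 * n^2 : ℝ) = ∑ _i : Fin n, ∑ _j : Fin n, (2:ℝ) := by
          simp [Finset.sum_const, Finset.card_univ]; ring
    _ ≤ _ := Finset.sum_le_sum fun i _ => Finset.sum_le_sum fun j _ => hpair i j
  rw [← hsum2] at hge
  have hn' : (0:ℝ) < n := by exact_mod_cast hn
  nlinarith

/-- The set of real eigenvalues of a positive matrix is bounded above. -/
lemma eigset_bddAbove {n : ℕ} (hn : 0 < n) (C : Matrix (Fin n) (Fin n) ℝ)
    (hpos : ∀ i j, 0 < C i j) :
    BddAbove {t : ℝ | ∃ v : Fin n → ℝ, v ≠ 0 ∧ C.mulVec v = t • v} := by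
  haveI : Nonempty (Fin n) := ⟨⟨0, hn⟩⟩
  refine ⟨univ.sup' univ_nonempty (fun i => ∑ j, C i j), ?_⟩
  rintro t ⟨v, hv, heig⟩
  obtain ⟨i₀, -, hmax⟩ := Finset.exists_max_image univ (fun i => |v i|) univ_nonempty
  have hvi₀ : 0 < |v i₀| := by
    obtain ⟨k, hk⟩ := Function.ne_iff.mp hv
    exact lt_of_lt_of_le (abs_pos.mpr hk) (hmax k (mem_univ k))
  have h1 : |t| * |v i₀| ≤ (∑ j, C i₀ j) * |v i₀| := by
    have h2 : t * v i₀ = ∑ j, C i₀ j * v j := by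
      have := congrFun heig i₀
      simp only [Pi.smul_apply, smul_eq_mul] at this
      rw [← this]; rfl
    calc |t| * |v i₀| = |t * v i₀| := (abs_mul t (v i₀)).symm
    _ = |∑ j, C i₀ j * v j| := by rw [h2]
    _ ≤ ∑ j, |C i₀ j * v j| := Finset.abs_sum_le_sum_abs _ _
    _ ≤ ∑ j, C i₀ j * |v i₀| := by
        refine Finset.sum_le_sum fun j _ => ?_
        rw [abs_mul, abs_of_pos (hpos i₀ j)]
        exact mul_le_mul_of_nonneg_left (hmax j (mem_univ j)) (hpos i₀ j).le
    _ = (∑ j, C i₀ j) * |v i₀| := by rw [Finset.sum_mul]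
  have h3 : |t| ≤ ∑ j, C i₀ j := le_of_mul_le_mul_right h1 hvi₀
  exact le_trans (le_trans (le_abs_self t) h3)
    (Finset.le_sup' (fun i => ∑ j, C i j) (mem_univ i₀))

open SimpleGraph Walk

/-- Multiplicative weight of a walk: the product of `A d.snd d.fst` over darts. -/
noncomputable def walkWt {V : Type*} (A : V → V → ℝ) {G : SimpleGraph V}
    {u v : V} (p : G.Walk u v) : ℝ :=
  (p.darts.map fun d => A d.toProd.2 d.toProd.1).prod

@[simp] lemma walkWt_nil {V : Type*} (A : V → V → ℝ) {G : SimpleGraph V} {u : V} :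
    walkWt A (Walk.nil : G.Walk u u) = 1 := by simp [walkWt]

@[simp] lemma walkWt_cons {V : Type*} (A : V → V → ℝ) {G : SimpleGraph V}
    {u v w : V} (h : G.Adj u v) (p : G.Walk v w) :
    walkWt A (Walk.cons h p) = A v u * walkWt A p := by
  simp [walkWt]

@[simp] lemma walkWt_append {V : Type*} (A : V → V → ℝ) {G : SimpleGraph V}
    {u v w : V} (p : G.Walk u v) (q : G.Walk v w) :
    walkWt A (p.append q) = walkWt A p * walkWt A q := by
  simp [walkWt, Walk.darts_append]

lemma walkWt_pos {V : Type*} (A : V → V → ℝ) {G : SimpleGraph V}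
    (hA : ∀ i j, G.Adj i j → 0 < A i j) {u v : V} (p : G.Walk u v) :
    0 < walkWt A p := by
  induction p with
  | nil => simp
  | cons h p ih =>
      rw [walkWt_cons]
      exact mul_pos (hA _ _ h.symm) ih

/-- On a tree whose edges carry positive reciprocal weights, there is a
positive potential `w` with `w i = A i j * w j` along each edge. -/
lemma tree_potential {V : Type*} (A : V → V → ℝ) {G : SimpleGraph V}
    (htree : G.IsTree) (hApos : ∀ i j, G.Adj i j → 0 < A i j)
    (hArec : ∀ i j, G.Adj i j → A j i = 1 / A i j) :
    ∃ w : V → ℝ, (∀ i, 0 < w i) ∧ ∀ i j, G.Adj i j → w i = A i j * w j := by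
  classical
  haveI : Nonempty V := htree.isConnected.nonempty
  set r : V := Classical.arbitrary V with hr
  have hup := htree.existsUnique_path
  set P : ∀ i : V, G.Walk r i := fun i => (hup r i).choose with hP
  have hPpath : ∀ i, (P i).IsPath := fun i => (hup r i).choose_spec.1
  have hPuniq : ∀ i (q : G.Walk r i), q.IsPath → q = P i :=
    fun i q hq => (hup r i).choose_spec.2 q hq
  set w : V → ℝ := fun i => walkWt A (P i) with hw
  refine ⟨w, fun i => walkWt_pos A hApos (P i), ?_⟩
  intro i j hadj
  by_cases hj : j ∈ (P i).support
  · -- j on the path to i; then dropUntil is the single edge j -> i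
    set p' := (P i).takeUntil j hj with hp'
    set d := (P i).dropUntil j hj with hd
    have hp'path : p'.IsPath := (hPpath i).takeUntil hj
    have hdpath : d.IsPath := (hPpath i).dropUntil hj
    have hsingle : (Walk.cons hadj.symm Walk.nil : G.Walk j i).IsPath := by
      rw [Walk.cons_isPath_iff]
      exact ⟨Walk.IsPath.nil, by simp [hadj.ne']⟩
    have hdeq : d = Walk.cons hadj.symm Walk.nil := by
      obtain ⟨c, -, hc⟩ := hup j i
      rw [hc d hdpath, hc _ hsingle]
    have hp'eq : p' = P j := hPuniq j p' hp'path
    have hspec := (P i).take_spec hj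
    have : w i = walkWt A p' * walkWt A d := by
      rw [hw]
      simp only
      rw [← hspec, walkWt_append]
    rw [this, hdeq, hp'eq]
    simp only [walkWt_cons, walkWt_nil]
    rw [hw]
    ring
  · -- j not on path to i; extend the path to i by the edge i -> j
    set q := (P i).concat hadj with hq
    have hqpath : q.IsPath := by
      rw [← Walk.isPath_reverse_iff, hq, Walk.reverse_concat, Walk.cons_isPath_iff]
      refine ⟨(hPpath i).reverse, ?_⟩
      rw [Walk.support_reverse, List.mem_reverse]
      exact hj
    have hqeq : q = P j := hPuniq j q hqpath
    have h1 : w j = w i * A j i := by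
      rw [hw]
      simp only
      rw [← hqeq, hq, Walk.concat_eq_append, walkWt_append, walkWt_cons, walkWt_nil]
      ring
    have hAij : 0 < A i j := hApos i j hadj
    rw [h1, hArec i j hadj]
    field_simp

end Aux

/-- If the graph representation of an incomplete `n×n` pairwise
comparison matrix `A` is a spanning tree and missing entries may be arbitrary
positive reals (Method 1), then there is a completion `B` of `A` and a positive
vector `w` with `B w = n·w`; hence the minimum of `λ_max` over all positive
completions equals `n` and the optimal consistency index
`CI = (λ_max − n)/(n − 1)` equals `0`. -/
theorem spanning_tree_optimal_completion (n : ℕ)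
    (A : Matrix (Fin n) (Fin n) ℝ)
    (miss : Finset (Fin n × Fin n)) (hmiss : ∀ p ∈ miss, p.1 < p.2)
    (hApos : ∀ i j, (i, j) ∉ miss → (j, i) ∉ miss → 0 < A i j)
    (hArec : ∀ i j, (i, j) ∉ miss → (j, i) ∉ miss → A j i = 1 / A i j)
    (htree : (repGraph n miss).IsTree) :
    (∃ B : Matrix (Fin n) (Fin n) ℝ,
      (∀ i j, 0 < B i j) ∧ (∀ i j, B j i = 1 / B i j) ∧
      (∀ i j, (i, j) ∉ miss → (j, i) ∉ miss → B i j = A i j) ∧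
      ∃ w : Fin n → ℝ, (∀ i, 0 < w i) ∧ B.mulVec w = (n : ℝ) • w) ∧
    sInf ((fun x => lambdaMax (fillMatrix A miss x)) ''
        {x | ∀ p ∈ miss, 0 < x p}) = n ∧
    (sInf ((fun x => lambdaMax (fillMatrix A miss x)) ''
        {x | ∀ p ∈ miss, 0 < x p}) - n) / ((n : ℝ) - 1) = 0 := by
  classical
  haveI hne : Nonempty (Fin n) := htree.isConnected.nonempty
  have hn : 0 < n := hne.elim fun i => lt_of_le_of_lt (Nat.zero_le _) i.isLt
  set G := repGraph n miss with hG
  have hadj_iff : ∀ i j, G.Adj i j ↔ i ≠ j ∧ (i, j) ∉ miss ∧ (j, i) ∉ miss := by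
    intro i j
    rw [hG, repGraph, SimpleGraph.fromRel_adj]
    tauto
  have hnotboth : ∀ i j : Fin n, (i, j) ∈ miss → (j, i) ∈ miss → False := by
    intro i j h1 h2
    exact lt_asymm (hmiss _ h1) (hmiss _ h2)
  have hAdiag : ∀ i, A i i = 1 := by
    intro i
    have hm : (i, i) ∉ miss := fun h => absurd (hmiss _ h) (lt_irrefl _)
    have h1 := hArec i i hm hm
    have h2 := hApos i i hm hm
    have h3 : A i i * A i i = 1 := by
      field_simp at h1
      nlinarith
    nlinarith
  -- construct the potential from the spanning tree
  obtain ⟨w, hwpos, hwedge⟩ := tree_potential (fun i j => A i j) htree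
    (fun i j hadj => by
      obtain ⟨h1, h2, h3⟩ := (hadj_iff i j).mp hadj
      exact hApos i j h2 h3)
    (fun i j hadj => by
      obtain ⟨h1, h2, h3⟩ := (hadj_iff i j).mp hadj
      exact hArec i j h2 h3)
  -- the consistent completion
  set B : Matrix (Fin n) (Fin n) ℝ := fun i j => w i / w j with hB
  have hBpos : ∀ i j, 0 < B i j := fun i j => div_pos (hwpos i) (hwpos j)
  have hBrec : ∀ i j, B j i = 1 / B i j := by
    intro i j
    rw [hB]
    simp only [one_div_div]
  have hBagree : ∀ i j, (i, j) ∉ miss → (j, i) ∉ miss → B i j = A i j := by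
    intro i j h1 h2
    by_cases hij : i = j
    · subst hij
      rw [hB]
      simp only
      rw [div_self (hwpos i).ne', hAdiag i]
    · have hadj : G.Adj i j := (hadj_iff i j).mpr ⟨hij, h1, h2⟩
      have := hwedge i j hadj
      rw [hB]
      simp only
      rw [this, mul_div_assoc, div_self (hwpos j).ne', mul_one]
  have hBw : B.mulVec w = (n : ℝ) • w := by
    funext i
    simp only [Matrix.mulVec, dotProduct, Pi.smul_apply, smul_eq_mul, hB]
    have : ∀ j, w i / w j * w j = w i := fun j => div_mul_cancel₀ (w i) (hwpos j).ne'
    rw [Finset.sum_congr rfl fun j _ => this j]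
    simp [Finset.sum_const, Finset.card_univ, mul_comm]
  -- the eigenvalue-n completion witness as a fill
  set x₀ : Fin n × Fin n → ℝ := fun p => w p.1 / w p.2 with hx₀
  have hx₀mem : x₀ ∈ {x : Fin n × Fin n → ℝ | ∀ p ∈ miss, 0 < x p} :=
    fun p _ => div_pos (hwpos p.1) (hwpos p.2)
  have hfill : fillMatrix A miss x₀ = B := by
    funext i j
    rw [fillMatrix]
    split_ifs with h1 h2
    · rfl
    · rw [hx₀]
      simp only [one_div_div]
      rfl
    · exact (hBagree i j h1 h2).symm
  -- lambdaMax of the consistent completion is n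
  have hwne : w ≠ 0 := by
    intro h
    exact absurd (congrFun h (Classical.arbitrary (Fin n)))
      (hwpos (Classical.arbitrary (Fin n))).ne'
  have hnmem : (n : ℝ) ∈ {t : ℝ | ∃ v : Fin n → ℝ, v ≠ 0 ∧ B.mulVec v = t • v} :=
    ⟨w, hwne, hBw⟩
  have hEub : ∀ t ∈ {t : ℝ | ∃ v : Fin n → ℝ, v ≠ 0 ∧ B.mulVec v = t • v}, t ≤ n := by
    rintro t ⟨v, hv, heig⟩
    -- B v = S • w where S = ∑ j, v j / w j
    set S : ℝ := ∑ j, v j / w j with hS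
    have hBv : B.mulVec v = S • w := by
      funext i
      simp only [Matrix.mulVec, dotProduct, Pi.smul_apply, smul_eq_mul, hB, hS]
      rw [Finset.sum_mul]
      refine Finset.sum_congr rfl fun j _ => ?_
      field_simp
    by_cases ht : t = 0
    · rw [ht]
      exact_mod_cast Nat.zero_le n
    · -- t • v = S • w, so v is a multiple of w
      have h1 : t • v = S • w := by rw [← heig, hBv]
      have h2 : v = (t⁻¹ * S) • w := by
        have h := congrArg (fun z => t⁻¹ • z) h1
        simp only [smul_smul, inv_mul_cancel₀ ht, one_smul] at h
        exact h
      have hS0 : S ≠ 0 := by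
        intro h
        apply hv
        rw [h2, h, mul_zero, zero_smul]
      -- apply B to h2 : B v = (t⁻¹ S) B w = (t⁻¹ S n) w; also B v = S w
      have h3 : B.mulVec v = (t⁻¹ * S * n) • w := by
        rw [h2, Matrix.mulVec_smul, hBw, smul_smul]
      have h4 : S • w = (t⁻¹ * S * n) • w := by rw [← hBv, h3]
      have h5 : S = t⁻¹ * S * n := by
        have := congrFun h4 (Classical.arbitrary (Fin n))
        simp only [Pi.smul_apply, smul_eq_mul] at this
        exact mul_right_cancel₀ (hwpos _).ne' this
      have h6 : t = n := by
        have h7 : S * t = S * n := by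
          calc S * t = t⁻¹ * S * n * t := by rw [← h5]
          _ = S * n := by
            rw [mul_comm, ← mul_assoc, ← mul_assoc, mul_inv_cancel₀ ht, one_mul]
        exact mul_left_cancel₀ hS0 h7
      rw [h6]
  have hlamB : lambdaMax B = n := by
    rw [lambdaMax]
    exact le_antisymm (csSup_le ⟨(n : ℝ), hnmem⟩ hEub)
      (le_csSup ⟨(n : ℝ), fun t ht => hEub t ht⟩ hnmem)
  -- every positive completion is a positive reciprocal matrix with λmax ≥ n
  have hlower : ∀ x ∈ {x : Fin n × Fin n → ℝ | ∀ p ∈ miss, 0 < x p},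
      (n : ℝ) ≤ lambdaMax (fillMatrix A miss x) := by
    intro x hx
    set C := fillMatrix A miss x with hC
    have hCpos : ∀ i j, 0 < C i j := by
      intro i j
      rw [hC, fillMatrix]
      split_ifs with h1 h2
      · exact hx _ h1
      · exact div_pos one_pos (hx _ h2)
      · exact hApos i j h1 h2
    have hCrec : ∀ i j, C j i = 1 / C i j := by
      intro i j
      rw [hC]
      simp only [fillMatrix]
      by_cases h1 : (i, j) ∈ miss
      · have h2 : (j, i) ∉ miss := fun h => hnotboth i j h1 h
        simp [h1, h2]
      · by_cases h2 : (j, i) ∈ miss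
        · simp [h1, h2, one_div_one_div]
        · simp [h1, h2, hArec i j h1 h2]
    obtain ⟨lam, u, hupos, heig⟩ := perron_exists hn C hCpos
    have hlamge := recip_eig_ge hn C hCpos hCrec u hupos lam heig
    have hu0 : u ≠ 0 := by
      intro h
      exact absurd (congrFun h (Classical.arbitrary (Fin n)))
        (hupos (Classical.arbitrary (Fin n))).ne'
    refine le_trans hlamge ?_
    rw [lambdaMax]
    exact le_csSup (eigset_bddAbove hn C hCpos) ⟨u, hu0, heig⟩
  -- the infimum
  have hnS : (n : ℝ) ∈ ((fun x => lambdaMax (fillMatrix A miss x)) ''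
      {x | ∀ p ∈ miss, 0 < x p}) := by
    refine ⟨x₀, hx₀mem, ?_⟩
    show lambdaMax (fillMatrix A miss x₀) = (n : ℝ)
    rw [hfill, hlamB]
  have hsInf : sInf ((fun x => lambdaMax (fillMatrix A miss x)) ''
      {x | ∀ p ∈ miss, 0 < x p}) = n := by
    refine le_antisymm (csInf_le ⟨(n : ℝ), ?_⟩ hnS) (le_csInf ⟨(n : ℝ), hnS⟩ ?_)
    · rintro t ⟨x, hx, rfl⟩
      exact hlower x hx
    · rintro t ⟨x, hx, rfl⟩
      exact hlower x hx
  refine ⟨⟨B, hBpos, hBrec, hBagree, w, hwpos, hBw⟩, hsInf, ?_⟩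
  rw [hsInf]
  simp
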